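/- arXiv:2106.14472 — 3 statements merged into one kernel-verified Lean document; each statement's English description precedes it below -/
import Mathlib

section
/- For d ≥ 2 and φ ≤ d − 2, the integral over the open unit ball B_d of (1 − ‖z‖²)^{φ+1−d} / ‖e₁ − z‖² dz is infinite. -/
open MeasureTheory Metric
open scoped ENNReal

theorem integral_infinite_of_phi_le {d : ℕ} (hd : 2 ≤ d) (φ : ℝ) (hφ : φ ≤ (d : ℝ) - 2) :
    ∫⁻ z in Metric.ball (0 : EuclideanSpace ℝ (Fin d)) 1,
        ENNReal.ofReal ((1 - ‖z‖ ^ 2) ^ (φ + 1 - d) /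
          ‖EuclideanSpace.single (⟨0, by omega⟩ : Fin d) (1 : ℝ) - z‖ ^ 2) = ⊤ := by
  classical
  set E := EuclideanSpace ℝ (Fin d)
  set μ : Measure E := volume
  set e1 : E := EuclideanSpace.single (⟨0, by omega⟩ : Fin d) (1 : ℝ) with he1
  have he1norm : ‖e1‖ = 1 := by
    rw [he1, EuclideanSpace.norm_single, norm_one]
  set f : E → ℝ≥0∞ := fun z =>
    ENNReal.ofReal ((1 - ‖z‖ ^ 2) ^ (φ + 1 - d) / ‖e1 - z‖ ^ 2) with hf
  -- radii
  set r : ℕ → ℝ := fun n => 1 - (1/2 : ℝ) ^ (n + 1) with hr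
  have hr_mem : ∀ n, (1/2 : ℝ) ≤ r n ∧ r n < 1 := by
    intro n
    constructor
    · have : (1/2 : ℝ) ^ (n + 1) ≤ (1/2) ^ 1 :=
        pow_le_pow_of_le_one (by norm_num) (by norm_num) (by omega)
      simp only [hr]; nlinarith
    · have : (0:ℝ) < (1/2) ^ (n+1) := by positivity
      simp only [hr]; linarith
  have hr_mono : ∀ n, r n < r (n + 1) := by
    intro n
    have : (1/2 : ℝ) ^ (n + 2) < (1/2) ^ (n+1) :=
      pow_lt_pow_right_of_lt_one₀ (by norm_num) (by norm_num) (by omega)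
    simp only [hr]; linarith
  set s : ℕ → Set E := fun n => ball 0 (r (n+1)) \ ball 0 (r n) with hs
  have hs_meas : ∀ n, MeasurableSet (s n) :=
    fun n => measurableSet_ball.diff measurableSet_ball
  have hs_sub : ∀ n, s n ⊆ ball 0 1 := by
    intro n z hz
    exact ball_subset_ball (hr_mem (n+1)).2.le hz.1
  have hs_disj : Pairwise (Function.onFun Disjoint s) := by
    have key : ∀ m n, m < n → Disjoint (s m) (s n) := by
      intro m n hmn
      have h1 : s m ⊆ ball 0 (r n) := by
        refine (Set.diff_subset).trans (ball_subset_ball ?_)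
        have : ∀ k l, k ≤ l → r k ≤ r l := by
          intro k l hkl
          induction l with
          | zero => simp_all
          | succ l ih =>
            rcases Nat.lt_or_ge k (l+1) with h | h
            · exact (ih (by omega)).trans (hr_mono l).le
            · have : k = l + 1 := by omega
              simp [this]
        exact this _ _ hmn
      have h2 : Disjoint (ball (0:E) (r n)) (s n) := by
        rw [Set.disjoint_right]; intro z hz; exact hz.2
      exact h2.mono_left h1
    intro m n hmn
    rcases Nat.lt_or_ge m n with h | h
    · exact key m n h
    · exact (key n m (by omega)).symm
  -- pointwise lower bound on s n
  have hpt : ∀ n, ∀ z ∈ s n, ENNReal.ofReal ((2:ℝ) ^ n / 4) ≤ f z := by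
    intro n z hz
    have hzlt : ‖z‖ < r (n+1) := mem_ball_zero_iff.mp hz.1
    have hzge : r n ≤ ‖z‖ := le_of_not_gt (fun h => hz.2 (mem_ball_zero_iff.mpr h))
    have hz1 : ‖z‖ < 1 := hzlt.trans_le (hr_mem (n+1)).2.le
    have hz0 : (0:ℝ) ≤ ‖z‖ := norm_nonneg z
    have hx_pos : (0:ℝ) < 1 - ‖z‖ ^ 2 := by nlinarith
    have hx_le1 : 1 - ‖z‖ ^ 2 ≤ 1 := by nlinarith
    have hx_small : 1 - ‖z‖ ^ 2 ≤ (1/2 : ℝ) ^ n := by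
      have : r n ≤ ‖z‖ := hzge
      have h2 : (1:ℝ) - ‖z‖ ≤ (1/2) ^ (n+1) := by simp only [hr] at this; linarith
      have h3 : (1:ℝ) + ‖z‖ ≤ 2 := by linarith
      calc 1 - ‖z‖ ^ 2 = (1 - ‖z‖) * (1 + ‖z‖) := by ring
        _ ≤ (1/2) ^ (n+1) * 2 := by
            apply mul_le_mul h2 h3 (by linarith) (by positivity)
        _ = (1/2) ^ n := by ring
    -- numerator bound
    have hnum : (2:ℝ) ^ n ≤ (1 - ‖z‖ ^ 2) ^ (φ + 1 - d) := by
      have hexp : φ + 1 - d ≤ -1 := by linarith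
      have h1 : (1 - ‖z‖ ^ 2) ^ (-1 : ℝ) ≤ (1 - ‖z‖ ^ 2) ^ (φ + 1 - d) :=
        Real.rpow_le_rpow_of_exponent_ge hx_pos hx_le1 hexp
      have h2 : (2:ℝ) ^ n ≤ (1 - ‖z‖ ^ 2) ^ (-1 : ℝ) := by
        rw [Real.rpow_neg_one]
        rw [le_inv_comm₀ (by positivity) hx_pos]
        calc (1 - ‖z‖^2) ≤ (1/2)^n := hx_small
          _ = ((2:ℝ)^n)⁻¹ := by rw [one_div, inv_pow]
      linarith
    -- denominator bound
    have hden : ‖e1 - z‖ ^ 2 ≤ 4 := by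
      have h1 : ‖e1 - z‖ ≤ ‖e1‖ + ‖z‖ := norm_sub_le _ _
      have h2 : ‖e1 - z‖ ≤ 2 := by rw [he1norm] at h1; linarith
      nlinarith [norm_nonneg (e1 - z)]
    have hden_pos : (0:ℝ) < ‖e1 - z‖ ^ 2 := by
      have hne : e1 - z ≠ 0 := by
        intro h
        have : e1 = z := by
          have := sub_eq_zero.mp h; exact this
        rw [← this] at hz1
        rw [he1norm] at hz1; linarith
      exact pow_pos (norm_pos_iff.mpr hne) 2
    apply ENNReal.ofReal_le_ofReal
    exact div_le_div₀ (by positivity) hnum hden_pos hden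
  -- measure lower bound
  haveI : Nonempty (Fin d) := ⟨⟨0, by omega⟩⟩
  haveI hnt : Nontrivial E := by unfold E; infer_instance
  have hfin : Module.finrank ℝ E = d := finrank_euclideanSpace_fin
  have hμball : μ (ball (0:E) 1) ≠ 0 := by
    simp only [μ]
    exact (measure_ball_pos volume 0 one_pos).ne'
  have h0r : ∀ n, (0:ℝ) ≤ r n := fun n => le_trans (by norm_num) (hr_mem n).1
  have hμs : ∀ n, ENNReal.ofReal ((1/2)^(n+2) * (1/2)^(d-1)) * μ (ball (0:E) 1) ≤ μ (s n) := by
    intro n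
    have hsub : ball (0:E) (r n) ⊆ ball 0 (r (n+1)) := ball_subset_ball (hr_mono n).le
    have hmeas : μ (s n) = μ (ball (0:E) (r (n+1))) - μ (ball (0:E) (r n)) :=
      measure_diff hsub measurableSet_ball.nullMeasurableSet measure_ball_lt_top.ne
    have hb1 : μ (ball (0:E) (r (n+1))) = ENNReal.ofReal (r (n+1) ^ d) * μ (ball 0 1) := by
      rw [Measure.addHaar_ball μ 0 (h0r (n+1)), hfin]
    have hb2 : μ (ball (0:E) (r n)) = ENNReal.ofReal (r n ^ d) * μ (ball 0 1) := by
      rw [Measure.addHaar_ball μ 0 (h0r n), hfin]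
    rw [hmeas, hb1, hb2, ← ENNReal.sub_mul (fun _ _ => measure_ball_lt_top.ne)]
    apply mul_le_mul_left _ _
    rw [← ENNReal.ofReal_sub _ (pow_nonneg (h0r n) d)]
    apply ENNReal.ofReal_le_ofReal
    -- r(n+1)^d - r n ^ d ≥ (r(n+1) - r n) * r n ^ (d-1)
    have hrn : (1/2:ℝ) ≤ r n := (hr_mem n).1
    have hrn1 : r n ≤ r (n+1) := (hr_mono n).le
    have hd1 : d - 1 + 1 = d := by omega
    have key : (r (n+1) - r n) * r n ^ (d-1) ≤ r (n+1) ^ d - r n ^ d := by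
      have h1 : r n ^ (d-1) ≤ r (n+1) ^ (d-1) :=
        pow_le_pow_left₀ (h0r n) hrn1 _
      have h2 : r (n+1) * r n ^ (d-1) ≤ r (n+1) ^ d := by
        calc r (n+1) * r n ^ (d-1) ≤ r (n+1) * r (n+1) ^ (d-1) := by
              apply mul_le_mul_of_nonneg_left h1 (h0r (n+1))
          _ = r (n+1) ^ d := by rw [← pow_succ']; rw [hd1]
      have h3 : r n ^ d = r n * r n ^ (d - 1) := by
        rw [← pow_succ']; rw [hd1]
      nlinarith
    have hdiff : r (n+1) - r n = (1/2:ℝ)^(n+2) := by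
      simp only [hr]; ring
    calc (1/2:ℝ)^(n+2) * (1/2)^(d-1) = (r (n+1) - r n) * (1/2)^(d-1) := by rw [hdiff]
      _ ≤ (r (n+1) - r n) * r n ^ (d-1) := by
          apply mul_le_mul_of_nonneg_left (pow_le_pow_left₀ (by norm_num) hrn _) (sub_nonneg.mpr hrn1)
      _ ≤ r (n+1) ^ d - r n ^ d := key
  -- per-annulus integral lower bound
  set c := ENNReal.ofReal ((1/16 : ℝ) * (1/2)^(d-1)) * μ (ball (0:E) 1) with hc
  have hc_ne : c ≠ 0 := by
    rw [hc]
    apply mul_ne_zero _ hμball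
    simp only [ne_eq, ENNReal.ofReal_eq_zero, not_le]
    positivity
  have hint : ∀ n, c ≤ ∫⁻ z in s n, f z ∂μ := by
    intro n
    calc c ≤ ENNReal.ofReal ((2:ℝ)^n/4) * (ENNReal.ofReal ((1/2)^(n+2) * (1/2)^(d-1)) * μ (ball (0:E) 1)) := by
          rw [hc, ← mul_assoc, ← ENNReal.ofReal_mul (by positivity)]
          apply mul_le_mul_left (ENNReal.ofReal_le_ofReal _) _
          have : (2:ℝ)^n/4 * ((1/2)^(n+2) * (1/2)^(d-1)) = (1/16) * (1/2)^(d-1) := by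
            field_simp
            rw [pow_add, ← mul_assoc, ← mul_pow]; norm_num
          rw [this]
      _ ≤ ENNReal.ofReal ((2:ℝ)^n/4) * μ (s n) := mul_le_mul_right (hμs n) _
      _ = ∫⁻ _ in s n, ENNReal.ofReal ((2:ℝ)^n/4) ∂μ := (setLIntegral_const _ _).symm
      _ ≤ ∫⁻ z in s n, f z ∂μ := setLIntegral_mono' (hs_meas n) (hpt n)
  -- conclude
  have hunion : ∫⁻ z in ⋃ n, s n, f z ∂μ = ∑' n, ∫⁻ z in s n, f z ∂μ := by
    rw [Measure.restrict_iUnion hs_disj (fun n => (hs_meas n)), lintegral_sum_measure]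
  have htop : (⊤ : ℝ≥0∞) ≤ ∫⁻ z in ball (0:E) 1, f z ∂μ := by
    calc (⊤ : ℝ≥0∞) = ∑' _ : ℕ, c := (ENNReal.tsum_const_eq_top_of_ne_zero hc_ne).symm
      _ ≤ ∑' n, ∫⁻ z in s n, f z ∂μ := ENNReal.tsum_le_tsum hint
      _ = ∫⁻ z in ⋃ n, s n, f z ∂μ := hunion.symm
      _ ≤ ∫⁻ z in ball (0:E) 1, f z ∂μ :=
        lintegral_mono' (Measure.restrict_mono (Set.iUnion_subset hs_sub) le_rfl) le_rfl
  exact top_le_iff.mp htop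
end

section
/- In dimension one, with the change of coordinates z' = (z+1)/2 ∈ (0,1) and prototypes p' ∈ {0,1}, the penalized Busemann loss with φ = 1 satisfies (1/2)·ℓ(z', p') + log 2 = −p'·log(z') − (1 − p')·log(1 − z'); i.e., it equals the binary cross-entropy loss up to an affine transformation. -/
theorem busemann_is_cross_entropy (z' p' : ℝ) (hz : z' ∈ Set.Ioo (0:ℝ) 1)
    (hp : p' = 0 ∨ p' = 1) :
    (1 / 2) * (2 * Real.log (|p' - z'| / (2 * z' * (1 - z')))) + Real.log 2 =
      -p' * Real.log z' - (1 - p') * Real.log (1 - z') := by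
  obtain ⟨hz0, hz1⟩ := hz
  have h1z : (0:ℝ) < 1 - z' := by linarith
  rcases hp with rfl | rfl
  · have : |(0:ℝ) - z'| / (2 * z' * (1 - z')) = z' / (2 * z' * (1 - z')) := by
      rw [abs_of_nonpos (by linarith)]; ring_nf
    rw [this]
    have : z' / (2 * z' * (1 - z')) = (2 * (1 - z'))⁻¹ := by
      field_simp
    rw [this, Real.log_inv, Real.log_mul (by norm_num) h1z.ne']
    ring
  · have : |(1:ℝ) - z'| / (2 * z' * (1 - z')) = (2 * z')⁻¹ := by
      rw [abs_of_pos h1z]; field_simp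
    rw [this, Real.log_inv, Real.log_mul (by norm_num) hz0.ne']
    ring
end

section
/- Consequently, for z ≠ 0 in the open unit ball and a finite set P of unit-norm prototypes, argmin_{p ∈ P} b_p(z) = argmax_{p ∈ P} ⟨z/‖z‖, p⟩, where b_p(z) = log(‖p − z‖²/(1 − ‖z‖²)): minimizing the Busemann function over prototypes is equivalent to maximizing cosine similarity. -/
theorem argmin_busemann_eq_argmax_cosine {d : ℕ}
    (z : EuclideanSpace ℝ (Fin d)) (hz0 : z ≠ 0) (hz : ‖z‖ < 1)
    (P : Finset (EuclideanSpace ℝ (Fin d))) (hP : P.Nonempty)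
    (hunit : ∀ p ∈ P, ‖p‖ = 1) (p : EuclideanSpace ℝ (Fin d)) (hp : p ∈ P) :
    (∀ q ∈ P, Real.log (‖p - z‖ ^ 2 / (1 - ‖z‖ ^ 2)) ≤
        Real.log (‖q - z‖ ^ 2 / (1 - ‖z‖ ^ 2))) ↔
    (∀ q ∈ P, (inner ℝ ((‖z‖)⁻¹ • z) q : ℝ) ≤ inner ℝ ((‖z‖)⁻¹ • z) p) := by
  have hzpos : (0:ℝ) < ‖z‖ := norm_pos_iff.mpr hz0
  have hden : (0:ℝ) < 1 - ‖z‖ ^ 2 := by nlinarith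
  have hsq : ∀ q ∈ P, ‖q - z‖ ^ 2 = 1 + ‖z‖ ^ 2 - 2 * inner ℝ z q := by
    intro q hq
    have := @norm_sub_sq_real (EuclideanSpace ℝ (Fin d)) _ _ q z
    rw [hunit q hq] at this
    rw [this, real_inner_comm]; ring
  have hpos : ∀ q ∈ P, (0:ℝ) < ‖q - z‖ ^ 2 := by
    intro q hq
    have hne : q - z ≠ 0 := by
      intro h
      rw [sub_eq_zero] at h
      have := hunit q hq
      rw [h] at this
      linarith
    have : (0:ℝ) < ‖q - z‖ := norm_pos_iff.mpr hne
    positivity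
  have hinner : ∀ q : EuclideanSpace ℝ (Fin d),
      (inner ℝ ((‖z‖)⁻¹ • z) q : ℝ) = (‖z‖)⁻¹ * inner ℝ z q := fun q =>
    real_inner_smul_left z q _
  constructor
  · intro h q hq
    have h1 := h q hq
    have h2 : ‖p - z‖ ^ 2 / (1 - ‖z‖ ^ 2) ≤ ‖q - z‖ ^ 2 / (1 - ‖z‖ ^ 2) := by
      have e := Real.exp_le_exp.mpr h1
      rwa [Real.exp_log (div_pos (hpos p hp) hden),
        Real.exp_log (div_pos (hpos q hq) hden)] at e
    have h3 : ‖p - z‖ ^ 2 ≤ ‖q - z‖ ^ 2 := by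
      have := mul_le_mul_of_nonneg_right h2 hden.le
      rw [div_mul_cancel₀ _ hden.ne', div_mul_cancel₀ _ hden.ne'] at this
      exact this
    have hs := hsq p hp
    have hs2 := hsq q hq
    rw [hs, hs2] at h3
    rw [hinner, hinner]
    have : (inner ℝ z q : ℝ) ≤ inner ℝ z p := by linarith
    exact mul_le_mul_of_nonneg_left this (by positivity)
  · intro h q hq
    have h1 := h q hq
    rw [hinner, hinner] at h1
    have h2 : (inner ℝ z q : ℝ) ≤ inner ℝ z p :=
      (mul_le_mul_iff_of_pos_left (by positivity : (0:ℝ) < ‖z‖⁻¹)).mp h1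
    have h3 : ‖p - z‖ ^ 2 ≤ ‖q - z‖ ^ 2 := by
      rw [hsq p hp, hsq q hq]; linarith
    exact Real.log_le_log (div_pos (hpos p hp) hden)
      (by gcongr)
end
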